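/- Let (Ω,F,P) be a probability space, F_1, F_2 ⊆ F sub-σ-fields, and C_1 ⊆ C_2 measurable subsets of Ω. If F_1, F_2 are a nonsingular pair within C_2, then they are a nonsingular pair within C_1. -/

import Mathlib

open MeasureTheory Set
open scoped ENNReal

noncomputable section

/-- `F1, F2` are a nonsingular pair within `C`: there is a measurable
`f : Ω × Ω → [0,∞)` with `P(A ∩ B ∩ C) = ∫_{A×B} f d(P⊗P)` for all
`A ∈ F1`, `B ∈ F2`. -/
def NonsingularPair {Ω : Type*} [inst : MeasurableSpace Ω] (P : Measure Ω)
    (F1 F2 : MeasurableSpace Ω) (C : Set Ω) : Prop :=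
  ∃ f : Ω × Ω → ℝ≥0∞,
    @Measurable _ _ (@Prod.instMeasurableSpace Ω Ω inst inst) _ f ∧
    ∀ A B : Set Ω, MeasurableSet[F1] A → MeasurableSet[F2] B →
      P (A ∩ B ∩ C) = ∫⁻ p in A ×ˢ B, f p ∂(@Measure.prod Ω Ω inst inst P P)
theorem stmt7 {Ω : Type*} [inst : MeasurableSpace Ω] (P : Measure Ω)
    [IsProbabilityMeasure P] (C1 C2 : Set Ω)
    (hC1 : MeasurableSet C1) (hC2 : MeasurableSet C2) (hsub : C1 ⊆ C2)
    (F1 F2 : MeasurableSpace Ω) (h1 : F1 ≤ inst) (h2 : F2 ≤ inst)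
    (h : @NonsingularPair Ω inst P F1 F2 C2) :
    @NonsingularPair Ω inst P F1 F2 C1 := by
  clear hC1 hC2
  obtain ⟨f, hf, hfeq⟩ := h
  obtain ⟨m', hm'⟩ : ∃ m : MeasurableSpace (Ω × Ω),
      m = @Prod.instMeasurableSpace Ω Ω F1 F2 := ⟨_, rfl⟩
  have hm : m' ≤ @Prod.instMeasurableSpace Ω Ω inst inst := by
    rw [hm']
    exact sup_le_sup (MeasurableSpace.comap_mono h1) (MeasurableSpace.comap_mono h2)
  have hd : @Measurable Ω (Ω × Ω) inst m' (fun ω => (ω, ω)) := by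
    rw [hm']
    exact Measurable.prodMk (measurable_id'' h1) (measurable_id'' h2)
  set ν1 : @Measure (Ω × Ω) m' :=
    @Measure.map Ω (Ω × Ω) inst m' (fun ω => (ω, ω)) (P.restrict C1) with hν1def
  set ν2 : @Measure (Ω × Ω) m' :=
    @Measure.map Ω (Ω × Ω) inst m' (fun ω => (ω, ω)) (P.restrict C2) with hν2def
  set μt : @Measure (Ω × Ω) m' :=
    @Measure.trim (Ω × Ω) m' _ (@Measure.prod Ω Ω inst inst P P) hm with hμtdef
  set μft : @Measure (Ω × Ω) m' :=
    @Measure.trim (Ω × Ω) m' _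
      (@Measure.withDensity (Ω × Ω) _ (@Measure.prod Ω Ω inst inst P P) f) hm with hμftdef
  have hdiag : ∀ A B : Set Ω, (fun ω : Ω => (ω, ω)) ⁻¹' (A ×ˢ B) = A ∩ B := by
    intro A B; ext ω; simp [Set.mem_prod]
  have hrect : ∀ {A B : Set Ω}, MeasurableSet[F1] A → MeasurableSet[F2] B →
      MeasurableSet[m'] (A ×ˢ B) := by
    intro A B hA hB; rw [hm']; exact @MeasurableSet.prod Ω Ω F1 F2 _ _ hA hB
  have hν2rect : ∀ A B : Set Ω, MeasurableSet[F1] A → MeasurableSet[F2] B →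
      ν2 (A ×ˢ B) = μft (A ×ˢ B) := by
    intro A B hA hB
    rw [hν2def, hμftdef,
      @Measure.map_apply Ω (Ω × Ω) inst m' _ _ hd _ (hrect hA hB), hdiag,
      Measure.restrict_apply (h1 A hA |>.inter (h2 B hB)),
      @trim_measurableSet_eq (Ω × Ω) m' _ _ _ hm (hrect hA hB),
      @withDensity_apply (Ω × Ω) _ _ f _ ((h1 A hA).prod (h2 B hB))]
    exact hfeq A B hA hB
  haveI hfin1 : @IsFiniteMeasure (Ω × Ω) m' ν1 := by
    refine @IsFiniteMeasure.mk (Ω × Ω) m' _ ?_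
    rw [hν1def, @Measure.map_apply Ω (Ω × Ω) inst m' _ _ hd _ MeasurableSet.univ]
    exact measure_lt_top (P.restrict C1) _
  haveI hfin2 : @IsFiniteMeasure (Ω × Ω) m' ν2 := by
    refine @IsFiniteMeasure.mk (Ω × Ω) m' _ ?_
    rw [hν2def, @Measure.map_apply Ω (Ω × Ω) inst m' _ _ hd _ MeasurableSet.univ]
    exact measure_lt_top (P.restrict C2) _
  haveI hfint : @IsFiniteMeasure (Ω × Ω) m' μt := by
    rw [hμtdef]; exact @isFiniteMeasure_trim (Ω × Ω) m' _ _ hm _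
  have hgen : m' = @MeasurableSpace.generateFrom (Ω × Ω)
      (Set.image2 (· ×ˢ ·) { s : Set Ω | MeasurableSet[F1] s }
        { t : Set Ω | MeasurableSet[F2] t }) := by
    rw [hm']; exact (@generateFrom_prod Ω Ω F1 F2).symm
  have hν2 : ν2 = μft := by
    refine @ext_of_generate_finite (Ω × Ω) m' ν2 μft _ hgen
      (@isPiSystem_prod Ω Ω F1 F2) hfin2 ?_ ?_
    · rintro _ ⟨A, hA, B, hB, rfl⟩
      exact hν2rect A B hA hB
    · have := hν2rect Set.univ Set.univ MeasurableSet.univ MeasurableSet.univ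
      rwa [Set.univ_prod_univ] at this
  have hac : @Measure.AbsolutelyContinuous (Ω × Ω) m' ν1 μt := by
    refine Measure.AbsolutelyContinuous.mk ?_
    intro s hs hs0
    rw [hμtdef, @trim_measurableSet_eq (Ω × Ω) m' _ _ _ hm hs] at hs0
    have hν2s : ν2 s = 0 := by
      rw [hν2, hμftdef, @trim_measurableSet_eq (Ω × Ω) m' _ _ _ hm hs,
        @withDensity_apply (Ω × Ω) _ _ f _ (hm s hs),
        Measure.restrict_eq_zero.mpr hs0, lintegral_zero_measure]
    refine le_antisymm (le_trans ?_ hν2s.le) zero_le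
    rw [hν1def, hν2def, @Measure.map_apply Ω (Ω × Ω) inst m' _ _ hd _ hs,
      @Measure.map_apply Ω (Ω × Ω) inst m' _ _ hd _ hs]
    exact Measure.restrict_mono hsub le_rfl _
  have hgmeas : @Measurable (Ω × Ω) ℝ≥0∞ m' _ (@Measure.rnDeriv (Ω × Ω) m' ν1 μt) :=
    @Measure.measurable_rnDeriv (Ω × Ω) m' ν1 μt
  have hwd : @Measure.withDensity (Ω × Ω) m' μt (@Measure.rnDeriv (Ω × Ω) m' ν1 μt) = ν1 :=
    @Measure.withDensity_rnDeriv_eq (Ω × Ω) m' ν1 μt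
      (@Measure.haveLebesgueDecomposition_of_finiteMeasure (Ω × Ω) m' ν1 μt hfin1 hfint) hac
  refine ⟨@Measure.rnDeriv (Ω × Ω) m' ν1 μt, hgmeas.mono hm le_rfl, ?_⟩
  intro A B hA hB
  have hABm' := hrect hA hB
  have e1 : P (A ∩ B ∩ C1) = ν1 (A ×ˢ B) := by
    rw [hν1def, @Measure.map_apply Ω (Ω × Ω) inst m' _ _ hd _ hABm', hdiag,
      Measure.restrict_apply (h1 A hA |>.inter (h2 B hB))]
  have e2 : ν1 (A ×ˢ B)
      = @lintegral (Ω × Ω) m' (@Measure.restrict (Ω × Ω) m' μt (A ×ˢ B))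
          (@Measure.rnDeriv (Ω × Ω) m' ν1 μt) := by
    conv_lhs => rw [← hwd]
    exact @withDensity_apply (Ω × Ω) m' μt _ _ hABm'
  have e3 : @Measure.restrict (Ω × Ω) m' μt (A ×ˢ B)
      = @Measure.trim (Ω × Ω) m' _
          ((@Measure.prod Ω Ω inst inst P P).restrict (A ×ˢ B)) hm := by
    rw [hμtdef]
    exact restrict_trim hm _ hABm'
  rw [e1, e2, e3, @lintegral_trim (Ω × Ω) m' _ _ hm _ hgmeas]
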